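/- Let p : 𝕌 → Sym(n,ℝ) be smooth and let L : 𝕌 → GL(n,ℝ) be smooth with L''(u) + p(u)L(u) = 0 for all u and with L(u)ᵀL'(u) symmetric for all u (a Lagrangian matrix). Then the smooth map β_L : 𝕌×ℝ×ℝⁿ → 𝕌×ℝ×ℝⁿ defined by β_L(u,v,x) = ( u, v + ½ xᵀL(u)ᵀL'(u)x, L(u)x ) satisfies β_L* G_β(p) = G_ρ(h), where h(u) = L(u)ᵀL(u); that is, β_L is an isometry from the Rosen metric G_ρ(LᵀL) onto the Brinkmann metric G_β(p). -/

import Mathlib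

open Matrix

attribute [local instance] Matrix.normedAddCommGroup Matrix.normedSpace

noncomputable section

/-- The manifold `ℝ × ℝ × ℝⁿ`, with points `(u, v, x)`. -/
abbrev Mfd (n : ℕ) := ℝ × ℝ × (Fin n → ℝ)

/-- The Brinkmann metric `2 du dv + xᵀ p(u) x du² − dxᵀ dx`, as a field of bilinear forms. -/
def Gb (n : ℕ) (p : ℝ → Matrix (Fin n) (Fin n) ℝ) :
    Mfd n → Mfd n → Mfd n → ℝ := fun m X₁ X₂ =>
  X₁.1 * X₂.2.1 + X₂.1 * X₁.2.1 + (m.2.2 ⬝ᵥ (p m.1 *ᵥ m.2.2)) * X₁.1 * X₂.1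
    - X₁.2.2 ⬝ᵥ X₂.2.2

/-- The Rosen metric `2 du dv − dxᵀ h(u) dx`, as a field of bilinear forms. -/
def Gr (n : ℕ) (h : ℝ → Matrix (Fin n) (Fin n) ℝ) :
    Mfd n → Mfd n → Mfd n → ℝ := fun m X₁ X₂ =>
  X₁.1 * X₂.2.1 + X₂.1 * X₁.2.1 - X₁.2.2 ⬝ᵥ (h m.1 *ᵥ X₂.2.2)

/-- Pullback of a field of bilinear forms under a smooth map. -/
def pull (n : ℕ) (φ : Mfd n → Mfd n) (G : Mfd n → Mfd n → Mfd n → ℝ) :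
    Mfd n → Mfd n → Mfd n → ℝ := fun m X Y =>
  G (φ m) (fderiv ℝ φ m X) (fderiv ℝ φ m Y)

/-- Entrywise derivative of a matrix-valued function of a real variable. -/
theorem hasDerivAt_entry {n : ℕ} {L : ℝ → Matrix (Fin n) (Fin n) ℝ} {u : ℝ}
    {M : Matrix (Fin n) (Fin n) ℝ} (h : HasDerivAt L M u) (i j : Fin n) :
    HasDerivAt (fun w => L w i j) (M i j) u :=
  (((ContinuousLinearMap.proj (R := ℝ) (φ := fun _ : Fin n => ℝ) j).comp
      (ContinuousLinearMap.proj (R := ℝ) (φ := fun _ : Fin n => Fin n → ℝ) i)).hasFDerivAt.comp_hasDerivAt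
    u h)

theorem dot_flip {n : ℕ} (A : Matrix (Fin n) (Fin n) ℝ) (v w : Fin n → ℝ) :
    (A *ᵥ v) ⬝ᵥ w = v ⬝ᵥ (Aᵀ *ᵥ w) := by
  rw [Matrix.dotProduct_mulVec, Matrix.vecMul_transpose]

/-- given a Lagrangian matrix `L` for `p` (i.e. `L'' + pL = 0`, `L`
invertible, `LᵀL'` symmetric), the Brinkmannization map
`β_L(u,v,x) = (u, v + ½xᵀLᵀL'x, Lx)` pulls back the Brinkmann metric `G_β(p)` to the
Rosen metric `G_ρ(LᵀL)`, i.e. it is an isometry `G_ρ(LᵀL) → G_β(p)`. -/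
theorem stmt13 (n : ℕ) (hn : 1 ≤ n)
    (U : Set ℝ) (hUopen : IsOpen U) (hUconv : Convex ℝ U) (hUne : U.Nonempty)
    (p : ℝ → Matrix (Fin n) (Fin n) ℝ)
    (hpsmooth : ContDiffOn ℝ (⊤ : ℕ∞) p U)
    (hpsymm : ∀ u ∈ U, (p u)ᵀ = p u)
    (L : ℝ → Matrix (Fin n) (Fin n) ℝ)
    (hLsmooth : ContDiffOn ℝ (⊤ : ℕ∞) L U)
    (hLinv : ∀ u ∈ U, IsUnit (L u))
    (hJacobi : ∀ u ∈ U, deriv (deriv L) u + p u * L u = 0)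
    (hLagrangian : ∀ u ∈ U, ((L u)ᵀ * deriv L u)ᵀ = (L u)ᵀ * deriv L u)
    (βL : Mfd n → Mfd n)
    (hβL : βL = fun m =>
      (m.1,
       m.2.1 + (1 / 2) * (m.2.2 ⬝ᵥ (((L m.1)ᵀ * deriv L m.1) *ᵥ m.2.2)),
       L m.1 *ᵥ m.2.2)) :
    ∀ m ∈ {m : Mfd n | m.1 ∈ U}, ∀ X Y,
      pull n βL (Gb n p) m X Y = Gr n (fun u => (L u)ᵀ * L u) m X Y := by
  intro m hm X Y
  obtain ⟨u, vv, x⟩ := m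
  simp only [Set.mem_setOf_eq] at hm
  -- differentiability facts
  have hLd : DifferentiableAt ℝ L u :=
    (hLsmooth.differentiableOn (by simp)).differentiableAt (hUopen.mem_nhds hm)
  have hL's : ContDiffOn ℝ (⊤ : ℕ∞) (deriv L) U :=
    ((contDiffOn_infty_iff_deriv_of_isOpen hUopen).1 hLsmooth).2
  have hL'd : DifferentiableAt ℝ (deriv L) u :=
    (hL's.differentiableOn (by simp)).differentiableAt (hUopen.mem_nhds hm)
  have hLe : ∀ i j, HasDerivAt (fun w => L w i j) (deriv L u i j) u :=
    fun i j => hasDerivAt_entry hLd.hasDerivAt i j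
  have hL'e : ∀ i j, HasDerivAt (fun w => deriv L w i j) (deriv (deriv L) u i j) u :=
    fun i j => hasDerivAt_entry hL'd.hasDerivAt i j
  -- derivative of the matrix S(w) = L(w)ᵀ L'(w), entrywise
  have hSe : ∀ i j, HasDerivAt (fun w => ((L w)ᵀ * deriv L w) i j)
      (((deriv L u)ᵀ * deriv L u + (L u)ᵀ * deriv (deriv L) u) i j) u := by
    intro i j
    have hfun : (fun w => ((L w)ᵀ * deriv L w) i j)
        = fun w => ∑ k, L w k i * deriv L w k j := by
      funext w; simp [Matrix.mul_apply]
    rw [hfun, show ((deriv L u)ᵀ * deriv L u + (L u)ᵀ * deriv (deriv L) u) i j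
        = ∑ k, (deriv L u k i * deriv L u k j + L u k i * deriv (deriv L) u k j) by
      simp [Matrix.mul_apply, Finset.sum_add_distrib]]
    exact HasDerivAt.fun_sum (fun k _ => (hLe k i).mul (hL'e k j))
  -- the key derivative computation
  have HB := (HasFDerivAt.prodMk hasFDerivAt_fst
        (((HasFDerivAt.comp ((u, vv, x) : Mfd n) hasFDerivAt_fst hasFDerivAt_snd).add
          ((HasFDerivAt.fun_sum (fun i (_ : i ∈ Finset.univ) =>
            (((ContinuousLinearMap.proj (R := ℝ) (φ := fun _ : Fin n => ℝ) i).hasFDerivAt.comp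
                ((u, vv, x) : Mfd n) (HasFDerivAt.comp ((u, vv, x) : Mfd n) hasFDerivAt_snd hasFDerivAt_snd)).mul
              (HasFDerivAt.fun_sum (fun j (_ : j ∈ Finset.univ) =>
                (((hSe i j).comp_hasFDerivAt ((u, vv, x) : Mfd n) hasFDerivAt_fst).mul
                  ((ContinuousLinearMap.proj (R := ℝ) (φ := fun _ : Fin n => ℝ) j).hasFDerivAt.comp
                    ((u, vv, x) : Mfd n) (HasFDerivAt.comp ((u, vv, x) : Mfd n) hasFDerivAt_snd hasFDerivAt_snd)))))))).const_mul
            (1 / 2))).prodMk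
          (hasFDerivAt_pi.2 (fun i =>
            HasFDerivAt.fun_sum (fun j (_ : j ∈ Finset.univ) =>
              (((hLe i j).comp_hasFDerivAt ((u, vv, x) : Mfd n) hasFDerivAt_fst).mul
                ((ContinuousLinearMap.proj (R := ℝ) (φ := fun _ : Fin n => ℝ) j).hasFDerivAt.comp
                  ((u, vv, x) : Mfd n) (HasFDerivAt.comp ((u, vv, x) : Mfd n) hasFDerivAt_snd hasFDerivAt_snd)))))))).congr_of_eventuallyEq
      (Filter.Eventually.of_forall (fun m' : Mfd n => show βL m' = _ by
        rw [hβL]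
        simp [dotProduct, Matrix.mulVec, Function.comp]
        rfl))
  have key : ∀ Z : Mfd n, fderiv ℝ βL (u, vv, x) Z =
      (Z.1,
       Z.2.1 + (1 / 2) * (x ⬝ᵥ (((deriv L u)ᵀ * deriv L u + (L u)ᵀ * deriv (deriv L) u) *ᵥ x)) * Z.1
         + (1 / 2) * (Z.2.2 ⬝ᵥ (((L u)ᵀ * deriv L u) *ᵥ x) + x ⬝ᵥ (((L u)ᵀ * deriv L u) *ᵥ Z.2.2)),
       Z.1 • (deriv L u *ᵥ x) + L u *ᵥ Z.2.2) := by
    intro Z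
    rw [HB.fderiv]
    simp only [ContinuousLinearMap.prod_apply, ContinuousLinearMap.add_apply,
      ContinuousLinearMap.smul_apply, ContinuousLinearMap.sum_apply,
      ContinuousLinearMap.coe_comp', Function.comp_apply,
      ContinuousLinearMap.coe_fst', ContinuousLinearMap.coe_snd',
      ContinuousLinearMap.proj_apply, ContinuousLinearMap.pi_apply, smul_eq_mul]
    refine Prod.ext rfl (Prod.ext ?_ ?_)
    · simp only [dotProduct, Matrix.mulVec, Finset.mul_sum, Finset.sum_mul, mul_add, add_mul,
        Finset.sum_add_distrib, Pi.mul_apply, Function.comp_apply, ContinuousLinearMap.proj_apply]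
      simp only [mul_comm, mul_left_comm, mul_assoc, mul_right_comm]
      ring
    · funext i
      simp only [ContinuousLinearMap.pi_apply, ContinuousLinearMap.sum_apply,
        ContinuousLinearMap.add_apply, ContinuousLinearMap.smul_apply,
        ContinuousLinearMap.coe_comp', Function.comp_apply,
        ContinuousLinearMap.coe_fst', ContinuousLinearMap.coe_snd',
        ContinuousLinearMap.proj_apply, smul_eq_mul, Pi.add_apply, Pi.smul_apply]
      simp only [dotProduct, Matrix.mulVec, Finset.mul_sum, Finset.sum_add_distrib]
      simp only [mul_comm, mul_left_comm, mul_assoc]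
      ring
  -- matrix identities
  have hl2 : deriv (deriv L) u = -(p u * L u) :=
    eq_neg_of_add_eq_zero_left (hJacobi u hm)
  have hS0 : ((L u)ᵀ * deriv L u)ᵀ = (L u)ᵀ * deriv L u := hLagrangian u hm
  -- dot product identities
  have e1 : ∀ w1 w2 : Fin n → ℝ,
      (L u *ᵥ w1) ⬝ᵥ (L u *ᵥ w2) = w1 ⬝ᵥ (((L u)ᵀ * L u) *ᵥ w2) := by
    intro w1 w2; rw [dot_flip, Matrix.mulVec_mulVec]
  have c1 : ∀ w : Fin n → ℝ,
      (deriv L u *ᵥ x) ⬝ᵥ (L u *ᵥ w) = w ⬝ᵥ (((L u)ᵀ * deriv L u) *ᵥ x) := by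
    intro w
    rw [dotProduct_comm, dot_flip, Matrix.mulVec_mulVec]
  have c2 : ∀ w : Fin n → ℝ,
      (L u *ᵥ w) ⬝ᵥ (deriv L u *ᵥ x) = w ⬝ᵥ (((L u)ᵀ * deriv L u) *ᵥ x) := by
    intro w
    rw [dot_flip, Matrix.mulVec_mulVec]
  have c3 : ∀ w : Fin n → ℝ,
      x ⬝ᵥ (((L u)ᵀ * deriv L u) *ᵥ w) = w ⬝ᵥ (((L u)ᵀ * deriv L u) *ᵥ x) := by
    intro w
    rw [dotProduct_comm, dot_flip, hS0]
  have hQ : x ⬝ᵥ (((deriv L u)ᵀ * deriv L u + (L u)ᵀ * deriv (deriv L) u) *ᵥ x)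
      = (deriv L u *ᵥ x) ⬝ᵥ (deriv L u *ᵥ x)
        - (L u *ᵥ x) ⬝ᵥ (p u *ᵥ (L u *ᵥ x)) := by
    rw [hl2, Matrix.add_mulVec, dotProduct_add, Matrix.mul_neg, Matrix.neg_mulVec,
      dotProduct_neg, ← Matrix.mulVec_mulVec, ← dot_flip, ← Matrix.mulVec_mulVec
      (M := (L u)ᵀ), ← dot_flip, ← Matrix.mulVec_mulVec]
    ring
  simp only [pull, Gb, Gr]
  rw [key X, key Y]
  simp only [hβL]
  simp only [dotProduct_add, add_dotProduct, dotProduct_smul,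
    smul_dotProduct, smul_eq_mul]
  simp only [hQ, c1, c2, c3, e1]
  ring
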